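/- arXiv:1209.1155 — 2 statements merged into one kernel-verified Lean document; each statement's English description precedes it below -/
import Mathlib

section
/- Let k be a field of characteristic p > 0 and let a be the 2-dimensional abelian p-Lie algebra over k with basis h, x satisfying h^[p] = 0 and x^[p] = 0. Then the element J := exp(h ⊗ x) = Σ_{i=0}^{p-1} (h^i ⊗ x^i)/i! is a Drinfeld twist for the restricted universal enveloping algebra u(a), i.e., J is invertible, (Δ⊗id)(J)(J⊗1) = (id⊗Δ)(J)(1⊗J), and (ε⊗id)(J) = (id⊗ε)(J) = 1. -/
open TensorProduct Coalgebra Finset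

section aux
variable (k : Type) [Field k] (p : ℕ) [hp : Fact p.Prime] [CharP k p]
variable {A : Type*} [Ring A] [Algebra k A]

noncomputable def texp (t : A) : A := ∑ i ∈ range p, ((i.factorial : k)⁻¹) • t ^ i

variable {k p}

lemma fact_cast_ne_zero {i : ℕ} (hi : i < p) : ((i.factorial : k)) ≠ 0 := by
  rw [Ne, CharP.cast_eq_zero_iff k p]
  intro hdvd
  exact absurd ((Nat.Prime.dvd_factorial hp.out).mp hdvd) (Nat.not_le.mpr hi)

omit [CharP k p] in
lemma texp_zero : texp k p (0 : A) = 1 := by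
  rw [texp, Finset.sum_eq_single 0]
  · simp
  · intro i hi hne; simp [zero_pow hne]
  · intro h; exact absurd (Finset.mem_range.mpr hp.out.pos) h

lemma coeff_eq {n m : ℕ} (hn : n < p) (hm : m ≤ n) :
    ((n.factorial : k))⁻¹ * (n.choose m : k) = ((m.factorial : k))⁻¹ * (((n - m).factorial : k))⁻¹ := by
  have key : (n.choose m : k) * m.factorial * (n - m).factorial = n.factorial := by
    rw_mod_cast [Nat.choose_mul_factorial_mul_factorial hm]
  have h1 : ((m.factorial : k)) ≠ 0 := fact_cast_ne_zero (lt_of_le_of_lt hm hn)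
  have h2 : (((n - m).factorial : k)) ≠ 0 := fact_cast_ne_zero (lt_of_le_of_lt (Nat.sub_le n m) hn)
  have h3 : ((n.factorial : k)) ≠ 0 := fact_cast_ne_zero hn
  field_simp
  linear_combination key

lemma texp_mul {a b : A} (hab : Commute a b)
    (h0 : ∀ i j : ℕ, p ≤ i + j → a ^ i * b ^ j = 0) :
    texp k p a * texp k p b = texp k p (a + b) := by
  rw [texp, texp, texp, Finset.sum_mul_sum]
  have lhs : ∀ i ∈ range p, ∑ j ∈ range p,
      ((i.factorial : k)⁻¹ • a ^ i) * ((j.factorial : k)⁻¹ • b ^ j)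
      = ∑ j ∈ range (p - i), ((i.factorial : k)⁻¹ * (j.factorial : k)⁻¹) • (a ^ i * b ^ j) := by
    intro i hi
    rw [Finset.mem_range] at hi
    rw [← Finset.sum_subset (Finset.range_subset_range.mpr (Nat.sub_le p i))]
    · exact Finset.sum_congr rfl fun j _ => by rw [smul_mul_smul_comm]
    · intro j hj1 hj2
      rw [Finset.mem_range] at hj1
      rw [Finset.mem_range, not_lt] at hj2
      rw [smul_mul_smul_comm, h0 i j (by omega), smul_zero]
  rw [Finset.sum_congr rfl lhs]
  have rhs : ∀ n ∈ range p, ((n.factorial : k)⁻¹) • (a + b) ^ n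
      = ∑ m ∈ range (n + 1), ((m.factorial : k)⁻¹ * ((n - m).factorial : k)⁻¹) • (a ^ m * b ^ (n - m)) := by
    intro n hn
    rw [hab.add_pow, Finset.smul_sum]
    refine Finset.sum_congr rfl fun m hm => ?_
    have hm' : m ≤ n := Nat.lt_succ_iff.mp (Finset.mem_range.mp hm)
    have hc : (a ^ m * b ^ (n - m) * (n.choose m : A))
        = (n.choose m : k) • (a ^ m * b ^ (n - m)) := by
      rw [Algebra.smul_def, Algebra.commutes, map_natCast]
    rw [hc, smul_smul, coeff_eq (Finset.mem_range.mp hn) hm']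
  rw [Finset.sum_congr rfl rhs]
  rw [Finset.sum_sigma', Finset.sum_sigma']
  refine Finset.sum_nbij' (fun q => ⟨q.1 + q.2, q.1⟩) (fun q => ⟨q.2, q.1 - q.2⟩) ?_ ?_ ?_ ?_ ?_
  · rintro ⟨i, j⟩ hq
    simp only [Finset.mem_sigma, Finset.mem_range] at hq ⊢
    omega
  · rintro ⟨n, m⟩ hq
    simp only [Finset.mem_sigma, Finset.mem_range] at hq ⊢
    omega
  · rintro ⟨i, j⟩ _; simp
  · rintro ⟨n, m⟩ hq
    simp only [Finset.mem_sigma, Finset.mem_range] at hq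
    have h1 : m + (n - m) = n := by omega
    simp [h1]
  · rintro ⟨i, j⟩ _; simp

omit hp [CharP k p] in
lemma texp_commute {a b : A} (hab : Commute a b) :
    Commute (texp k p a) (texp k p b) := by
  unfold texp
  refine Commute.sum_left _ _ _ fun i _ => Commute.sum_right _ _ _ fun j _ => ?_
  exact ((hab.pow_pow i j).smul_left _).smul_right _

omit hp [CharP k p] in
lemma pow_vanish {t : A} (ht : t ^ p = 0) {m : ℕ} (hm : p ≤ m) : t ^ m = 0 := by
  rw [← Nat.add_sub_cancel' hm, pow_add, ht, zero_mul]

lemma texp_neg_mul {t : A} (ht : t ^ p = 0) :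
    texp k p t * texp k p (-t) = 1 ∧ texp k p (-t) * texp k p t = 1 := by
  have h0 : ∀ i j : ℕ, p ≤ i + j → t ^ i * t ^ j = 0 := fun i j hij => by
    rw [← pow_add]; exact pow_vanish ht hij
  have h1 : ∀ i j : ℕ, p ≤ i + j → t ^ i * (-t) ^ j = 0 := fun i j hij => by
    rcases Nat.even_or_odd j with he | ho
    · rw [he.neg_pow, h0 i j hij]
    · rw [ho.neg_pow, mul_neg, h0 i j hij, neg_zero]
  have h2 : ∀ i j : ℕ, p ≤ i + j → (-t) ^ i * t ^ j = 0 := fun i j hij => by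
    rcases Nat.even_or_odd i with he | ho
    · rw [he.neg_pow, h0 i j hij]
    · rw [ho.neg_pow, neg_mul, h0 i j hij, neg_zero]
  constructor
  · rw [texp_mul (Commute.refl t).neg_right h1, add_neg_cancel, texp_zero]
  · rw [texp_mul (Commute.refl t).neg_left h2, neg_add_cancel, texp_zero]

end aux

/-- In the restricted enveloping algebra of the 2-dimensional abelian
`p`-Lie algebra with basis `h, x`, `h^[p] = x^[p] = 0` (abstractly: a cocommutative Hopf
algebra containing commuting primitive elements `h, x` with `h^p = x^p = 0`), the element
`J = ∑_{i<p} (h^i ⊗ x^i)/i!` is a Drinfeld twist. -/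
theorem stmt_2 {k : Type} [Field k] (p : ℕ) [Fact p.Prime] [CharP k p]
    {H : Type} [Ring H] [HopfAlgebra k H]
    (h x : H) (hcomm : Commute h x) (hhp : h ^ p = 0) (hxp : x ^ p = 0)
    (hprim : comul (R := k) h = h ⊗ₜ (1 : H) + (1 : H) ⊗ₜ h)
    (xprim : comul (R := k) x = x ⊗ₜ (1 : H) + (1 : H) ⊗ₜ x) :
    letI J : H ⊗[k] H := ∑ i ∈ range p, ((i.factorial : k)⁻¹) • ((h ^ i) ⊗ₜ (x ^ i))
    IsUnit J ∧
    ((Algebra.TensorProduct.assoc k k k H H H)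
        ((TensorProduct.map (comul (R := k)) LinearMap.id J) * (J ⊗ₜ (1 : H)))
      = (TensorProduct.map LinearMap.id (comul (R := k)) J) * ((1 : H) ⊗ₜ J)) ∧
    TensorProduct.lid k H (TensorProduct.map (counit (R := k)) LinearMap.id J) = 1 ∧
    TensorProduct.rid k H (TensorProduct.map LinearMap.id (counit (R := k)) J) = 1 := by
  set J : H ⊗[k] H := ∑ i ∈ range p, ((i.factorial : k)⁻¹) • ((h ^ i) ⊗ₜ[k] (x ^ i)) with hJdef
  have hJ : J = texp k p (h ⊗ₜ[k] x) := by
    rw [hJdef, texp]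
    exact Finset.sum_congr rfl fun i _ => by rw [Algebra.TensorProduct.tmul_pow]
  have htpow : (h ⊗ₜ[k] x) ^ p = 0 := by
    rw [Algebra.TensorProduct.tmul_pow, hxp, tmul_zero]
  obtain ⟨e1, e2⟩ := texp_neg_mul (k := k) (p := p) htpow
  refine ⟨⟨⟨J, texp k p (-(h ⊗ₜ[k] x)), by rw [hJ]; exact e1, by rw [hJ]; exact e2⟩, rfl⟩, ?_, ?_⟩
  · -- cocycle condition
    set a : H ⊗[k] (H ⊗[k] H) := h ⊗ₜ ((1 : H) ⊗ₜ x) with ha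
    set b : H ⊗[k] (H ⊗[k] H) := (1 : H) ⊗ₜ (h ⊗ₜ x) with hb
    set c : H ⊗[k] (H ⊗[k] H) := h ⊗ₜ (x ⊗ₜ (1 : H)) with hc
    have hap : ∀ i, a ^ i = (h ^ i) ⊗ₜ[k] ((1 : H) ⊗ₜ[k] (x ^ i)) := fun i => by
      rw [ha, Algebra.TensorProduct.tmul_pow, Algebra.TensorProduct.tmul_pow, one_pow]
    have hbp : ∀ i, b ^ i = (1 : H) ⊗ₜ[k] ((h ^ i) ⊗ₜ[k] (x ^ i)) := fun i => by
      rw [hb, Algebra.TensorProduct.tmul_pow, Algebra.TensorProduct.tmul_pow, one_pow]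
    have hcp : ∀ i, c ^ i = (h ^ i) ⊗ₜ[k] ((x ^ i) ⊗ₜ[k] (1 : H)) := fun i => by
      rw [hc, Algebra.TensorProduct.tmul_pow, Algebra.TensorProduct.tmul_pow, one_pow]
    have cab : Commute a b := by
      show a * b = b * a
      simp [ha, hb, Algebra.TensorProduct.tmul_mul_tmul]
    have cac : Commute a c := by
      show a * c = c * a
      simp [ha, hc, Algebra.TensorProduct.tmul_mul_tmul, hcomm.eq]
    have cbc : Commute b c := by
      show b * c = c * b
      simp [hb, hc, Algebra.TensorProduct.tmul_mul_tmul, hcomm.eq]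
    have cca : Commute c a := cac.symm
    have zab : ∀ i j : ℕ, p ≤ i + j → a ^ i * b ^ j = 0 := fun i j hij => by
      rw [hap, hbp, Algebra.TensorProduct.tmul_mul_tmul, Algebra.TensorProduct.tmul_mul_tmul,
        ← pow_add, pow_vanish (p := p) hxp hij, tmul_zero, tmul_zero]
    have zca : ∀ i j : ℕ, p ≤ i + j → c ^ i * a ^ j = 0 := fun i j hij => by
      rw [hcp, hap, Algebra.TensorProduct.tmul_mul_tmul, ← pow_add,
        pow_vanish (p := p) hhp hij, zero_tmul]
    have key1 : (Algebra.TensorProduct.assoc k k k H H H)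
        ((TensorProduct.map (comul (R := k)) LinearMap.id) J) = texp k p (a + b) := by
      rw [hJdef, map_sum, map_sum, texp]
      refine Finset.sum_congr rfl fun i _ => ?_
      rw [map_smul, map_smul, TensorProduct.map_tmul]
      congr 1
      rw [LinearMap.id_coe, id_eq, Bialgebra.comul_pow, hprim,
        ← Algebra.TensorProduct.tmul_pow, map_pow]
      congr 1
    have key2 : (Algebra.TensorProduct.assoc k k k H H H) (J ⊗ₜ[k] (1 : H)) = texp k p c := by
      rw [hJdef, TensorProduct.sum_tmul, map_sum, texp]
      refine Finset.sum_congr rfl fun i _ => ?_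
      rw [smul_tmul', Algebra.TensorProduct.assoc_tmul, ← smul_tmul', hcp]
    have key3 : (TensorProduct.map LinearMap.id (comul (R := k))) J = texp k p (c + a) := by
      rw [hJdef, map_sum, texp]
      refine Finset.sum_congr rfl fun i _ => ?_
      rw [map_smul, TensorProduct.map_tmul]
      congr 1
      rw [LinearMap.id_coe, id_eq, Bialgebra.comul_pow, xprim,
        ← Algebra.TensorProduct.tmul_pow]
      congr 1
      rw [tmul_add]
    have key4 : (1 : H) ⊗ₜ[k] J = texp k p b := by
      rw [hJdef, TensorProduct.tmul_sum, texp]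
      refine Finset.sum_congr rfl fun i _ => ?_
      rw [TensorProduct.tmul_smul, hbp]
    rw [map_mul, key1, key2, key3, key4, ← texp_mul cab zab, ← texp_mul cca zca,
      mul_assoc, (texp_commute cbc).eq, ← mul_assoc, (texp_commute cac).eq]
  · -- counit conditions
    rcases subsingleton_or_nontrivial H with hs | hn
    · exact ⟨Subsingleton.elim _ _, Subsingleton.elim _ _⟩
    have primct : ∀ y : H, comul (R := k) y = y ⊗ₜ (1 : H) + (1 : H) ⊗ₜ y →
        counit (R := k) y = 0 := by
      intro y hy
      have h1 := Coalgebra.rTensor_counit_comul (R := k) y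
      rw [hy, map_add, LinearMap.rTensor_tmul, LinearMap.rTensor_tmul,
        Bialgebra.counit_one] at h1
      have h2 : (counit (R := k) y) ⊗ₜ[k] (1 : H) = 0 := by
        rwa [add_eq_right] at h1
      have h3 := congrArg (TensorProduct.lid k H) h2
      rw [map_zero, TensorProduct.lid_tmul, Algebra.smul_def, mul_one] at h3
      exact (algebraMap k H).injective (by rw [h3, map_zero])
    have εh : counit (R := k) h = 0 := primct h hprim
    have εx : counit (R := k) x = 0 := primct x xprim
    have hppos : 0 < p := Fact.out (p := p.Prime) |>.pos
    constructor
    · rw [hJdef, map_sum, map_sum, Finset.sum_eq_single 0]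
      · simp
      · intro i _ hne
        rw [map_smul, map_smul, TensorProduct.map_tmul, Bialgebra.counit_pow, εh,
          zero_pow hne, zero_tmul, map_zero, smul_zero]
      · intro habs; exact absurd (Finset.mem_range.mpr hppos) habs
    · rw [hJdef, map_sum, map_sum, Finset.sum_eq_single 0]
      · simp
      · intro i _ hne
        rw [map_smul, map_smul, TensorProduct.map_tmul, Bialgebra.counit_pow, εx,
          zero_pow hne, tmul_zero, map_zero, smul_zero]
      · intro habs; exact absurd (Finset.mem_range.mpr hppos) habs
end

section
/- Let k be a field of characteristic p > 0. The truncated Weyl algebra k[x,y]/(xy − yx − 1, x^p, y^p) is a simple algebra (it has no nonzero proper two-sided ideals) of dimension p². -/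
open FreeAlgebra

/-- The defining relations of the truncated Weyl algebra
`k⟨x,y⟩/(xy − yx − 1, x^p, y^p)`. -/
inductive WeylRel (k : Type) [Field k] (p : ℕ) :
    FreeAlgebra k (Fin 2) → FreeAlgebra k (Fin 2) → Prop
  | comm : WeylRel k p (ι k (0 : Fin 2) * ι k (1 : Fin 2))
      (ι k (1 : Fin 2) * ι k (0 : Fin 2) + 1)
  | xp : WeylRel k p ((ι k (0 : Fin 2)) ^ p) 0
  | yp : WeylRel k p ((ι k (1 : Fin 2)) ^ p) 0

set_option linter.unusedSectionVars false

variable (k : Type) [Field k] (p : ℕ)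


/-- `X = d/dt` on `k[t]/t^p`. -/
def Xmat : Matrix (Fin p) (Fin p) k :=
  Matrix.of fun a b => if (a : ℕ) + 1 = (b : ℕ) then ((b : ℕ) : k) else 0

/-- `Y = mult by t` on `k[t]/t^p`. -/
def Ymat : Matrix (Fin p) (Fin p) k :=
  Matrix.of fun a b => if (a : ℕ) = (b : ℕ) + 1 then 1 else 0

lemma mulYX (a b : Fin p) :
    (Ymat k p * Xmat k p) a b = if a = b then ((a : ℕ) : k) else 0 := by
  rw [Matrix.mul_apply]
  rcases Nat.eq_zero_or_pos (a : ℕ) with h | h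
  · rw [Finset.sum_eq_zero]
    · simp [h]
    · intro c _
      simp [Ymat, h]
  · have hlt : (a : ℕ) - 1 < p := lt_of_le_of_lt (Nat.sub_le _ _) a.isLt
    rw [Finset.sum_eq_single (⟨(a : ℕ) - 1, hlt⟩ : Fin p)]
    · simp only [Ymat, Xmat, Matrix.of_apply]
      by_cases hab : a = b
      · subst hab
        have h1 : (a : ℕ) = (a : ℕ) - 1 + 1 := by omega
        simp [← h1]
      · have h2 : ¬ ((a : ℕ) - 1 + 1 = (b : ℕ)) := fun hh => hab (Fin.val_inj.mp (by omega))
        simp [h2, hab]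
    · intro c _ hc
      have hy : ¬ ((a : ℕ) = (c : ℕ) + 1) :=
        fun hh => hc (Fin.ext (show (c : ℕ) = (a : ℕ) - 1 by omega))
      simp [Ymat, hy]
    · simp

lemma mulXY [CharP k p] (a b : Fin p) :
    (Xmat k p * Ymat k p) a b = if a = b then (((a : ℕ) + 1 : ℕ) : k) else 0 := by
  rw [Matrix.mul_apply]
  rcases lt_or_ge ((a : ℕ) + 1) p with h | h
  · rw [Finset.sum_eq_single (⟨(a : ℕ) + 1, h⟩ : Fin p)]
    · simp only [Xmat, Ymat, Matrix.of_apply]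
      by_cases hab : a = b
      · subst hab; simp
      · have h2 : ¬ ((a : ℕ) + 1 = (b : ℕ) + 1) := fun hh => hab (Fin.val_inj.mp (by omega))
        simp [h2, hab, Fin.val_inj]
    · intro c _ hc
      have hx : ¬ ((a : ℕ) + 1 = (c : ℕ)) :=
        fun hh => hc (Fin.ext (show (c : ℕ) = (a : ℕ) + 1 by omega))
      simp [Xmat, hx]
    · simp
  · have hcast : (((a : ℕ) + 1 : ℕ) : k) = 0 := by
      have : (a : ℕ) + 1 = p := by omega
      rw [this, CharP.cast_eq_zero]
    rw [Finset.sum_eq_zero]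
    · simp [hcast]
    · intro c _
      have hx : ¬ ((a : ℕ) + 1 = (c : ℕ)) := by omega
      simp [Xmat, hx]

lemma XYcomm [CharP k p] : Xmat k p * Ymat k p = Ymat k p * Xmat k p + 1 := by
  ext a b
  rw [Matrix.add_apply, mulXY, mulYX, Matrix.one_apply]
  by_cases hab : a = b <;> simp [hab]

lemma pow_shift (M : Matrix (Fin p) (Fin p) k)
    (h : ∀ a b : Fin p, (a : ℕ) + 1 ≠ (b : ℕ) → M a b = 0) :
    ∀ (m : ℕ) (a b : Fin p), (a : ℕ) + m ≠ (b : ℕ) → (M ^ m) a b = 0 := by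
  intro m
  induction m with
  | zero =>
    intro a b hab
    rw [pow_zero, Matrix.one_apply_ne (fun hh => hab (by simp [hh]))]
  | succ n ih =>
    intro a b hab
    rw [pow_succ, Matrix.mul_apply, Finset.sum_eq_zero]
    intro c _
    by_cases hc : (a : ℕ) + n = (c : ℕ)
    · rw [h c b (by omega), mul_zero]
    · rw [ih a c hc, zero_mul]

lemma Xpow_p : Xmat k p ^ p = 0 := by
  ext a b
  rw [pow_shift k p _ (fun a b hab => by simp [Xmat, hab]) p a b (by omega)]
  rfl

lemma Ypow_p : Ymat k p ^ p = 0 := by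
  have hsup : ∀ a b : Fin p, (a : ℕ) + 1 ≠ (b : ℕ) → (Ymat k p).transpose a b = 0 := by
    intro a b hab
    have hh : ¬ ((b : ℕ) = (a : ℕ) + 1) := fun hh => hab hh.symm
    simp [Ymat, Matrix.transpose_apply, hh]
  have ht : (Ymat k p).transpose ^ p = 0 := by
    ext a b
    rw [pow_shift k p _ hsup p a b (by omega)]
    rfl
  have h2 := congrArg Matrix.transpose ht
  rwa [← Matrix.transpose_pow, Matrix.transpose_transpose, Matrix.transpose_zero] at h2


lemma Y_mul_E (i j : Fin p) (h : (i : ℕ) + 1 < p) :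
    Ymat k p * Matrix.single i j (1 : k) =
      Matrix.single (⟨(i : ℕ) + 1, h⟩ : Fin p) j 1 := by
  ext a b
  by_cases hb : b = j
  · subst hb
    rw [Matrix.mul_single_apply_same, mul_one]
    by_cases ha : a = ⟨(i : ℕ) + 1, h⟩
    · subst ha
      simp [Ymat]
    · have h1 : ¬ ((a : ℕ) = (i : ℕ) + 1) := fun hh => ha (Fin.ext hh)
      have h2 : (⟨(i : ℕ) + 1, h⟩ : Fin p) ≠ a := fun hh => ha hh.symm
      simp [Ymat, h1, h2]
  · rw [Matrix.mul_single_apply_of_ne _ _ _ _ _ hb,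
      Matrix.single_apply_of_col_ne _ _ (Ne.symm hb)]

lemma E_mul_X (i j : Fin p) (h : (j : ℕ) + 1 < p) :
    Matrix.single i j (1 : k) * Xmat k p =
      (((j : ℕ) + 1 : ℕ) : k) • Matrix.single i (⟨(j : ℕ) + 1, h⟩ : Fin p) 1 := by
  ext a b
  rw [Matrix.smul_apply]
  by_cases ha : a = i
  · subst ha
    rw [Matrix.single_mul_apply_same, one_mul]
    by_cases hbb : b = ⟨(j : ℕ) + 1, h⟩
    · subst hbb
      simp [Xmat]
    · have h1 : ¬ ((j : ℕ) + 1 = (b : ℕ)) := fun hh => hbb (Fin.ext hh.symm)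
      have h2 : (⟨(j : ℕ) + 1, h⟩ : Fin p) ≠ b := fun hh => hbb hh.symm
      simp [Xmat, h1, h2]
  · rw [Matrix.single_mul_apply_of_ne _ _ _ _ _ (fun hh => ha hh),
      Matrix.single_apply_of_row_ne (fun hh => ha hh.symm), smul_zero]

lemma YX_diag : Ymat k p * Xmat k p = Matrix.diagonal (fun i : Fin p => ((i : ℕ) : k)) := by
  ext a b
  rw [mulYX, Matrix.diagonal_apply]

lemma diag_list_prod (l : List ℕ) :
    (l.map fun j => Matrix.diagonal (fun i : Fin p => ((i : ℕ) : k)) - ((j : ℕ) : k) • 1).prod =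
      Matrix.diagonal (fun i : Fin p => (l.map fun j => ((i : ℕ) : k) - ((j : ℕ) : k)).prod) := by
  induction l with
  | nil => simp [Matrix.diagonal_one]
  | cons a l ih =>
    rw [List.map_cons, List.prod_cons, ih, Matrix.smul_one_eq_diagonal,
      Matrix.diagonal_sub, Matrix.diagonal_mul_diagonal]
    congr 1

lemma diag_single [NeZero p] (g : Fin p → k) (h0 : ∀ i : Fin p, i ≠ 0 → g i = 0) :
    Matrix.diagonal g = g 0 • Matrix.single (0 : Fin p) 0 1 := by
  ext a b
  rw [Matrix.smul_apply, Matrix.diagonal_apply]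
  by_cases hab : a = b
  · subst hab
    by_cases ha : a = 0
    · subst ha; simp
    · rw [if_pos rfl, h0 a ha, Matrix.single_apply_of_row_ne (fun hh => ha hh.symm),
        smul_zero]
  · rw [if_neg hab]
    by_cases ha : a = 0
    · subst ha
      rw [Matrix.single_apply_of_col_ne _ _ (fun hh => hab hh), smul_zero]
    · rw [Matrix.single_apply_of_row_ne (fun hh => ha hh.symm), smul_zero]

lemma gen_top [NeZero p] [CharP k p] (S : Subalgebra k (Matrix (Fin p) (Fin p) k))
    (hX : Xmat k p ∈ S) (hY : Ymat k p ∈ S) : S = ⊤ := by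
  have hp : 0 < p := Nat.pos_of_ne_zero (NeZero.ne p)
  have hcast : ∀ m : ℕ, 0 < m → m < p → ((m : ℕ) : k) ≠ 0 := by
    intro m h0 hm hc
    have := (CharP.cast_eq_zero_iff k p m).mp hc
    exact absurd (Nat.le_of_dvd h0 this) (by omega)
  -- E 0 0 ∈ S
  set l : List ℕ := List.range' 1 (p - 1) with hl
  have hmem_l : ∀ j ∈ l, 1 ≤ j ∧ j < p := by
    intro j hj
    rw [hl, List.mem_range'_1] at hj
    omega
  have hprod : (l.map fun j => Ymat k p * Xmat k p - ((j : ℕ) : k) • 1).prod ∈ S := by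
    apply list_prod_mem
    intro x hx
    rw [List.mem_map] at hx
    obtain ⟨j, _, rfl⟩ := hx
    exact S.sub_mem (S.mul_mem hY hX) (S.smul_mem (S.one_mem) _)
  have hdiag : Matrix.diagonal (fun i : Fin p => (l.map fun j => ((i : ℕ) : k) - ((j : ℕ) : k)).prod) =
      ((l.map fun j => (((0 : Fin p) : ℕ) : k) - ((j : ℕ) : k)).prod) • Matrix.single (0 : Fin p) 0 1 := by
    apply diag_single
    intro i hi
    apply List.prod_eq_zero
    rw [List.mem_map]
    refine ⟨(i : ℕ), ?_, by rw [sub_self]⟩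
    rw [hl, List.mem_range'_1]
    have h1 : (i : ℕ) ≠ 0 := fun hh => hi (Fin.ext (by simpa using hh))
    have h2 := i.isLt
    omega
  rw [YX_diag, diag_list_prod, hdiag] at hprod
  have hc0 : ((l.map fun j => (((0 : Fin p) : ℕ) : k) - ((j : ℕ) : k)).prod : k) ≠ 0 := by
    apply List.prod_ne_zero
    intro hx
    rw [List.mem_map] at hx
    obtain ⟨j, hj, hj0⟩ := hx
    obtain ⟨hj1, hj2⟩ := hmem_l j hj
    rw [sub_eq_zero] at hj0
    exact hcast j hj1 hj2 (by simp [← hj0])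
  have hE00 : Matrix.single (0 : Fin p) 0 (1 : k) ∈ S := by
    have := S.smul_mem hprod
      (((l.map fun j => (((0 : Fin p) : ℕ) : k) - ((j : ℕ) : k)).prod)⁻¹)
    rwa [smul_smul, inv_mul_cancel₀ hc0, one_smul] at this
  -- first column
  have hcol : ∀ (m : ℕ) (h : m < p), Matrix.single (⟨m, h⟩ : Fin p) (0 : Fin p) (1 : k) ∈ S := by
    intro m
    induction m with
    | zero => intro h; exact hE00
    | succ n ih =>
      intro h
      have hn : n < p := by omega
      have := S.mul_mem hY (ih hn)
      rwa [Y_mul_E k p ⟨n, hn⟩ 0 h] at this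
  -- all entries
  have hall : ∀ (i : Fin p) (m : ℕ) (h : m < p), Matrix.single i (⟨m, h⟩ : Fin p) (1 : k) ∈ S := by
    intro i m
    induction m with
    | zero => intro h; exact hcol (i : ℕ) i.isLt
    | succ n ih =>
      intro h
      have hn : n < p := by omega
      have hmul := S.mul_mem (ih hn) hX
      rw [E_mul_X k p i ⟨n, hn⟩ h] at hmul
      have := S.smul_mem hmul ((((n : ℕ) + 1 : ℕ) : k)⁻¹)
      rwa [smul_smul, inv_mul_cancel₀ (hcast (n + 1) (by omega) h), one_smul] at this
  rw [eq_top_iff]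
  intro M _
  rw [Matrix.matrix_eq_sum_single M]
  apply S.sum_mem
  intro i _
  apply S.sum_mem
  intro j _
  have : Matrix.single i j (M i j) = M i j • Matrix.single i j (1 : k) := by
    rw [Matrix.smul_single, smul_eq_mul, mul_one]
  rw [this]
  exact S.smul_mem (by simpa [Fin.eta] using hall i (j : ℕ) j.isLt) _


noncomputable def wx : RingQuot (WeylRel k p) :=
  RingQuot.mkAlgHom k (WeylRel k p) (ι k (0 : Fin 2))

noncomputable def wy : RingQuot (WeylRel k p) :=
  RingQuot.mkAlgHom k (WeylRel k p) (ι k (1 : Fin 2))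

lemma wcomm : wx k p * wy k p = wy k p * wx k p + 1 := by
  have := RingQuot.mkAlgHom_rel k (WeylRel.comm (k := k) (p := p))
  simpa [map_mul, map_add, map_one, wx, wy] using this

lemma wxp : wx k p ^ p = 0 := by
  have := RingQuot.mkAlgHom_rel k (WeylRel.xp (k := k) (p := p))
  simpa [map_pow, map_zero, wx] using this

lemma wyp : wy k p ^ p = 0 := by
  have := RingQuot.mkAlgHom_rel k (WeylRel.yp (k := k) (p := p))
  simpa [map_pow, map_zero, wy] using this

/-- the spanning set -/
noncomputable def wS [NeZero p] : Submodule k (RingQuot (WeylRel k p)) :=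
  Submodule.span k (Set.range fun ij : Fin p × Fin p =>
    wy k p ^ ((ij.1 : ℕ)) * wx k p ^ ((ij.2 : ℕ)))

variable [NeZero p]

lemma mem_wS (i j : ℕ) : wy k p ^ i * wx k p ^ j ∈ wS k p := by
  by_cases hi : i < p
  · by_cases hj : j < p
    · exact Submodule.subset_span ⟨(⟨i, hi⟩, ⟨j, hj⟩), rfl⟩
    · have : wx k p ^ j = 0 := pow_eq_zero_of_le (by omega) (wxp k p)
      rw [this, mul_zero]
      exact Submodule.zero_mem _
  · have : wy k p ^ i = 0 := pow_eq_zero_of_le (by omega) (wyp k p)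
    rw [this, zero_mul]
    exact Submodule.zero_mem _

lemma wS_mul_x {s : RingQuot (WeylRel k p)} (hs : s ∈ wS k p) : s * wx k p ∈ wS k p := by
  induction hs using Submodule.span_induction with
  | mem z hz =>
    obtain ⟨⟨i, j⟩, rfl⟩ := hz
    rw [mul_assoc, ← pow_succ]
    exact mem_wS k p _ _
  | zero => rw [zero_mul]; exact Submodule.zero_mem _
  | add a b _ _ ha hb => rw [add_mul]; exact Submodule.add_mem _ ha hb
  | smul c a _ ha => rw [smul_mul_assoc]; exact Submodule.smul_mem _ _ ha

lemma wy_mul_wS {s : RingQuot (WeylRel k p)} (hs : s ∈ wS k p) : wy k p * s ∈ wS k p := by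
  induction hs using Submodule.span_induction with
  | mem z hz =>
    obtain ⟨⟨i, j⟩, rfl⟩ := hz
    rw [← mul_assoc, ← pow_succ']
    exact mem_wS k p _ _
  | zero => rw [mul_zero]; exact Submodule.zero_mem _
  | add a b _ _ ha hb => rw [mul_add]; exact Submodule.add_mem _ ha hb
  | smul c a _ ha => rw [mul_smul_comm]; exact Submodule.smul_mem _ _ ha

lemma straighten : ∀ a : ℕ,
    wx k p * wy k p ^ (a + 1) =
      wy k p ^ (a + 1) * wx k p + (((a + 1 : ℕ)) : k) • wy k p ^ a := by
  intro a
  induction a with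
  | zero => simpa [pow_one] using wcomm k p
  | succ n ih =>
    have : wx k p * wy k p ^ (n + 2) = (wx k p * wy k p ^ (n + 1)) * wy k p := by
      rw [mul_assoc, ← pow_succ]
    rw [this, ih, add_mul, smul_mul_assoc, ← pow_succ, mul_assoc, wcomm, mul_add, mul_one,
      ← mul_assoc, ← pow_succ]
    push_cast
    simp only [add_smul, one_smul]
    abel

lemma xpow_mul_ypow (j : ℕ) : ∀ a : ℕ, wx k p ^ j * wy k p ^ a ∈ wS k p := by
  induction j with
  | zero =>
    intro a
    rw [pow_zero, one_mul]
    simpa [pow_zero, mul_one] using mem_wS k p a 0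
  | succ n ih =>
    intro a
    have hacc : wx k p ^ (n + 1) * wy k p ^ a = wx k p ^ n * (wx k p * wy k p ^ a) := by
      rw [pow_succ, mul_assoc]
    rw [hacc]
    cases a with
    | zero =>
      rw [pow_zero, mul_one, ← pow_succ]
      simpa [pow_zero, one_mul] using mem_wS k p 0 (n + 1)
    | succ m =>
      rw [straighten k p m, mul_add, ← mul_assoc, mul_smul_comm]
      exact Submodule.add_mem _ (wS_mul_x k p (ih (m + 1))) (Submodule.smul_mem _ _ (ih m))

lemma wS_mul_xpow (b : ℕ) {s : RingQuot (WeylRel k p)} (hs : s ∈ wS k p) :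
    s * wx k p ^ b ∈ wS k p := by
  induction b with
  | zero => simpa [pow_zero, mul_one] using hs
  | succ m ihm =>
    rw [pow_succ, ← mul_assoc]
    exact wS_mul_x k p ihm

lemma ypow_mul_wS (i : ℕ) {s : RingQuot (WeylRel k p)} (hs : s ∈ wS k p) :
    wy k p ^ i * s ∈ wS k p := by
  induction i with
  | zero => simpa [pow_zero, one_mul] using hs
  | succ m ihm =>
    rw [pow_succ', mul_assoc]
    exact wy_mul_wS k p ihm

lemma gen_mul_wS (i j : ℕ) {t : RingQuot (WeylRel k p)} (ht : t ∈ wS k p) :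
    (wy k p ^ i * wx k p ^ j) * t ∈ wS k p := by
  induction ht using Submodule.span_induction with
  | mem w hw =>
    obtain ⟨⟨a, b⟩, rfl⟩ := hw
    have key : wy k p ^ i * wx k p ^ j * (wy k p ^ (a : ℕ) * wx k p ^ (b : ℕ)) =
        wy k p ^ i * ((wx k p ^ j * wy k p ^ (a : ℕ)) * wx k p ^ (b : ℕ)) := by
      simp only [mul_assoc]
    rw [key]
    exact ypow_mul_wS k p i (wS_mul_xpow k p (b : ℕ) (xpow_mul_ypow k p j (a : ℕ)))
  | zero => rw [mul_zero]; exact Submodule.zero_mem _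
  | add a b _ _ ha hb => rw [mul_add]; exact Submodule.add_mem _ ha hb
  | smul c a _ ha => rw [mul_smul_comm]; exact Submodule.smul_mem _ _ ha

lemma wS_mul_wS {s t : RingQuot (WeylRel k p)} (hs : s ∈ wS k p) (ht : t ∈ wS k p) :
    s * t ∈ wS k p := by
  induction hs using Submodule.span_induction with
  | mem z hz =>
    obtain ⟨⟨i, j⟩, rfl⟩ := hz
    exact gen_mul_wS k p _ _ ht
  | zero => rw [zero_mul]; exact Submodule.zero_mem _
  | add a b _ _ ha hb => rw [add_mul]; exact Submodule.add_mem _ ha hb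
  | smul c a _ ha => rw [smul_mul_assoc]; exact Submodule.smul_mem _ _ ha

lemma wS_eq_top : wS k p = ⊤ := by
  rw [eq_top_iff]
  intro z _
  have hadj : Algebra.adjoin k (Set.range fun i : Fin 2 =>
      RingQuot.mkAlgHom k (WeylRel k p) (ι k i)) = ⊤ := by
    have h1 : (Set.range fun i : Fin 2 => RingQuot.mkAlgHom k (WeylRel k p) (ι k i)) =
        RingQuot.mkAlgHom k (WeylRel k p) '' (Set.range (ι k)) := by
      rw [← Set.range_comp]
      rfl
    rw [h1, ← AlgHom.map_adjoin, FreeAlgebra.adjoin_range_ι, Algebra.map_top,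
      (AlgHom.range_eq_top _).mpr (RingQuot.mkAlgHom_surjective k _)]
  have hz : z ∈ Algebra.adjoin k (Set.range fun i : Fin 2 =>
      RingQuot.mkAlgHom k (WeylRel k p) (ι k i)) := by rw [hadj]; trivial
  induction hz using Algebra.adjoin_induction with
  | mem w hw =>
    obtain ⟨i, rfl⟩ := hw
    fin_cases i
    · simpa [pow_zero, pow_one, one_mul, wx] using mem_wS k p 0 1
    · simpa [pow_zero, pow_one, mul_one, wy] using mem_wS k p 1 0
  | algebraMap r =>
    rw [Algebra.algebraMap_eq_smul_one]
    exact Submodule.smul_mem _ _ (by simpa [pow_zero, one_mul] using mem_wS k p 0 0)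
  | add a b _ _ ha hb => exact Submodule.add_mem _ (ha trivial) (hb trivial)
  | mul a b _ _ ha hb => exact wS_mul_wS k p (ha trivial) (hb trivial)

variable [CharP k p] [NeZero p]

noncomputable def wphi : RingQuot (WeylRel k p) →ₐ[k] Matrix (Fin p) (Fin p) k :=
  RingQuot.liftAlgHom k ⟨FreeAlgebra.lift k ![Xmat k p, Ymat k p], by
    intro a b h
    induction h with
    | comm =>
      simp only [map_mul, map_add, map_one, lift_ι_apply, Matrix.cons_val_zero,
        Matrix.cons_val_one, Matrix.head_cons]
      exact XYcomm k p
    | xp =>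
      simp only [map_pow, map_zero, lift_ι_apply, Matrix.cons_val_zero]
      exact Xpow_p k p
    | yp =>
      simp only [map_pow, map_zero, lift_ι_apply, Matrix.cons_val_one, Matrix.head_cons]
      exact Ypow_p k p⟩

lemma wphi_x : wphi k p (wx k p) = Xmat k p := by
  rw [wx, wphi, RingQuot.liftAlgHom_mkAlgHom_apply]
  simp [lift_ι_apply]

lemma wphi_y : wphi k p (wy k p) = Ymat k p := by
  rw [wy, wphi, RingQuot.liftAlgHom_mkAlgHom_apply]
  simp [lift_ι_apply]

lemma wphi_surj : Function.Surjective (wphi k p) := by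
  rw [← AlgHom.range_eq_top]
  apply gen_top
  · exact ⟨wx k p, wphi_x k p⟩
  · exact ⟨wy k p, wphi_y k p⟩

noncomputable instance : Module.Finite k (RingQuot (WeylRel k p)) :=
  ⟨⟨(Set.finite_range fun ij : Fin p × Fin p =>
      wy k p ^ ((ij.1 : ℕ)) * wx k p ^ ((ij.2 : ℕ))).toFinset, by
    rw [Set.Finite.coe_toFinset]
    exact wS_eq_top k p⟩⟩

lemma finrank_matrix' : Module.finrank k (Matrix (Fin p) (Fin p) k) = p ^ 2 := by
  rw [Module.finrank_matrix]
  simp [sq]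

lemma wfinrank : Module.finrank k (RingQuot (WeylRel k p)) = p ^ 2 := by
  have hle : Module.finrank k (RingQuot (WeylRel k p)) ≤ p ^ 2 := by
    have h1 := finrank_range_le_card (R := k)
      (fun ij : Fin p × Fin p => wy k p ^ ((ij.1 : ℕ)) * wx k p ^ ((ij.2 : ℕ)))
    rw [Set.finrank] at h1
    rw [← wS, wS_eq_top, finrank_top] at h1
    simpa [sq] using h1
  have hge : p ^ 2 ≤ Module.finrank k (RingQuot (WeylRel k p)) := by
    have h2 := LinearMap.finrank_range_le (wphi k p).toLinearMap
    have hrt : LinearMap.range (wphi k p).toLinearMap = ⊤ :=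
      LinearMap.range_eq_top.mpr (wphi_surj k p)
    rw [hrt, finrank_top, finrank_matrix'] at h2
    exact h2
  omega

lemma wphi_inj : Function.Injective (wphi k p) := by
  have h3 := LinearMap.finrank_range_add_finrank_ker (wphi k p).toLinearMap
  have hrt : LinearMap.range (wphi k p).toLinearMap = ⊤ :=
    LinearMap.range_eq_top.mpr (wphi_surj k p)
  rw [hrt, finrank_top, finrank_matrix', wfinrank] at h3
  have h4 : Module.finrank k (LinearMap.ker (wphi k p).toLinearMap) = 0 := by omega
  have h5 : LinearMap.ker (wphi k p).toLinearMap = ⊥ := Submodule.finrank_eq_zero.mp h4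
  exact LinearMap.ker_eq_bot.mp h5

noncomputable def weqv : RingQuot (WeylRel k p) ≃ₐ[k] Matrix (Fin p) (Fin p) k :=
  AlgEquiv.ofBijective (wphi k p) ⟨wphi_inj k p, wphi_surj k p⟩

noncomputable def widealIso :
    TwoSidedIdeal (RingQuot (WeylRel k p)) ≃o TwoSidedIdeal (Matrix (Fin p) (Fin p) k) where
  toFun I := I.comap ((weqv k p).symm : Matrix (Fin p) (Fin p) k →+* RingQuot (WeylRel k p))
  invFun J := J.comap ((weqv k p) : RingQuot (WeylRel k p) →+* Matrix (Fin p) (Fin p) k)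
  left_inv I := by
    ext x
    rw [TwoSidedIdeal.mem_comap, TwoSidedIdeal.mem_comap]
    simp
  right_inv J := by
    ext x
    rw [TwoSidedIdeal.mem_comap, TwoSidedIdeal.mem_comap]
    simp
  map_rel_iff' {I J} := by
    simp only [Equiv.coe_fn_mk]
    constructor
    · intro h x hx
      have hx' : weqv k p x ∈ I.comap ((weqv k p).symm :
          Matrix (Fin p) (Fin p) k →+* RingQuot (WeylRel k p)) := by
        rw [TwoSidedIdeal.mem_comap]
        simpa using hx
      have := h hx'
      rw [TwoSidedIdeal.mem_comap] at this
      simpa using this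
    · intro h x hx
      rw [TwoSidedIdeal.mem_comap] at hx ⊢
      exact h hx

instance wsimple : IsSimpleRing (RingQuot (WeylRel k p)) := by
  haveI : Nonempty (Fin p) := ⟨⟨0, Nat.pos_of_ne_zero (NeZero.ne p)⟩⟩
  exact ⟨(widealIso k p).isSimpleOrder⟩


/-- over a field of characteristic `p > 0`, the truncated Weyl algebra
`k[x,y]/(xy − yx − 1, x^p, y^p)` is a simple algebra of dimension `p²`. -/
theorem stmt_3 {k : Type} [Field k] (p : ℕ) [Fact p.Prime] [CharP k p] :
    IsSimpleRing (RingQuot (WeylRel k p)) ∧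
    Module.finrank k (RingQuot (WeylRel k p)) = p ^ 2 := by
  haveI : NeZero p := ⟨Nat.Prime.ne_zero Fact.out⟩
  exact ⟨wsimple k p, wfinrank k p⟩
end
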